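/- arXiv:2102.01947 — 2 statements merged into one kernel-verified Lean document; each statement's English description precedes it below -/
import Mathlib

section
/- Write μ ↗↗ λ if μ ⊆ λ, |λ| = |μ| + 2, and the two boxes of λ\μ lie in one column or in two consecutive columns. Then for every partition λ of 2n (resp. 2n+1) there exists a chain μ^{(0)} ↗↗ μ^{(1)} ↗↗ ... ↗↗ μ^{(n)} = λ where μ^{(0)} is the empty partition (resp. the one-box partition). In particular, every partition of size ≥ 2 has a predecessor under ↗↗. -/
open scoped BigOperators

def IsPartitionFun (f : ℕ → ℕ) : Prop := Antitone f ∧ ∃ N, ∀ n, N ≤ n → f n = 0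

def PartitionF : Type := {f : ℕ → ℕ // IsPartitionFun f}

noncomputable def psize (μ : PartitionF) : ℕ := ∑ᶠ i, μ.val i

noncomputable def conjP (μ : ℕ → ℕ) (k : ℕ) : ℕ := Nat.card {i : ℕ | k ≤ μ i}

/-- `λ` is obtained from `μ` by adding a vertical domino in column `k`. -/
def VDom (μ lam : ℕ → ℕ) (k : ℕ) : Prop :=
  conjP lam k = conjP μ k + 2 ∧ ∀ i, 1 ≤ i → i ≠ k → conjP lam i = conjP μ i

/-- `λ` is obtained from `μ` by adding one box in column `k` and one box in column `k+1`. -/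
def TwoCol (μ lam : ℕ → ℕ) (k : ℕ) : Prop :=
  conjP lam k = conjP μ k + 1 ∧ conjP lam (k + 1) = conjP μ (k + 1) + 1 ∧
    ∀ i, 1 ≤ i → i ≠ k → i ≠ k + 1 → conjP lam i = conjP μ i

/-- The relation `μ ↗↗ λ`: `μ ⊆ λ`, `|λ| = |μ| + 2`, and the two boxes of `λ∖μ` lie in a
single column or in two consecutive columns. -/
def UpUp (μ lam : PartitionF) : Prop :=
  (∀ i, μ.val i ≤ lam.val i) ∧ psize lam = psize μ + 2 ∧
    ∃ k, 1 ≤ k ∧ (VDom μ.val lam.val k ∨ TwoCol μ.val lam.val k)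

/-- The empty partition. -/
def emptyP : PartitionF := ⟨fun _ => 0, fun _ _ _ => le_rfl, 0, fun _ _ => rfl⟩

/-- The one-box partition `(1)`. -/
def oneboxP : PartitionF :=
  ⟨fun i => if i = 0 then 1 else 0, by
    constructor
    · intro a b hab
      dsimp only
      split_ifs <;> omega
    · exact ⟨1, fun n hn => by simp [Nat.one_le_iff_ne_zero.mp hn]⟩⟩

lemma sset_finite {f : ℕ → ℕ} {N : ℕ} (hf : ∀ n, N ≤ n → f n = 0) {k : ℕ} (hk : 1 ≤ k) :
    {i : ℕ | k ≤ f i}.Finite := by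
  apply (Set.finite_Iio N).subset
  intro i hi
  simp only [Set.mem_Iio]
  by_contra h
  push_neg at h
  have := hf i h
  simp only [Set.mem_setOf_eq] at hi
  omega

lemma conjP_congr {f g : ℕ → ℕ} {k : ℕ} (h : ∀ i, k ≤ f i ↔ k ≤ g i) :
    conjP f k = conjP g k := by
  unfold conjP
  have : {i : ℕ | k ≤ f i} = {i : ℕ | k ≤ g i} := Set.ext fun i => h i
  rw [this]

lemma conjP_add_one {f g : ℕ → ℕ} {N k r : ℕ} (hg : ∀ n, N ≤ n → g n = 0) (hk : 1 ≤ k)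
    (hmem : k ≤ f r) (hnot : ¬ k ≤ g r) (hoth : ∀ i, i ≠ r → (k ≤ f i ↔ k ≤ g i)) :
    conjP f k = conjP g k + 1 := by
  unfold conjP
  rw [Nat.card_coe_set_eq, Nat.card_coe_set_eq]
  have hset : {i : ℕ | k ≤ f i} = insert r {i : ℕ | k ≤ g i} := by
    ext i
    rcases eq_or_ne i r with rfl | hir
    · simp [hmem]
    · simp [hir, hoth i hir]
  rw [hset, Set.ncard_insert_of_notMem (by simpa using hnot) (sset_finite hg hk)]

lemma conjP_add_two {f g : ℕ → ℕ} {N k r s : ℕ} (hg : ∀ n, N ≤ n → g n = 0) (hk : 1 ≤ k)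
    (hrs : r ≠ s)
    (hmr : k ≤ f r) (hnr : ¬ k ≤ g r) (hms : k ≤ f s) (hns : ¬ k ≤ g s)
    (hoth : ∀ i, i ≠ r → i ≠ s → (k ≤ f i ↔ k ≤ g i)) :
    conjP f k = conjP g k + 2 := by
  unfold conjP
  rw [Nat.card_coe_set_eq, Nat.card_coe_set_eq]
  have hset : {i : ℕ | k ≤ f i} = insert r (insert s {i : ℕ | k ≤ g i}) := by
    ext i
    rcases eq_or_ne i r with rfl | hir
    · simp [hmr]
    rcases eq_or_ne i s with rfl | his
    · simp [hms]
    · simp [hir, his, hoth i hir his]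
  rw [hset, Set.ncard_insert_of_notMem (by simp [hrs, hnr]) (((sset_finite hg hk)).insert s),
    Set.ncard_insert_of_notMem (by simpa using hns) (sset_finite hg hk)]

lemma psize_eq_sum (f : PartitionF) {N : ℕ} (hN : ∀ n, N ≤ n → f.val n = 0) :
    psize f = ∑ i ∈ Finset.range N, f.val i := by
  apply finsum_eq_sum_of_support_subset
  intro i hi
  simp only [Function.mem_support] at hi
  simp only [Finset.coe_range, Set.mem_Iio]
  by_contra h
  exact hi (hN i (by omega))

lemma psize_add (μ lam : PartitionF) (hle : ∀ i, μ.val i ≤ lam.val i) {N : ℕ}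
    (hN : ∀ n, N ≤ n → lam.val n = 0)
    (h2 : ∑ i ∈ Finset.range N, (lam.val i - μ.val i) = 2) :
    psize lam = psize μ + 2 := by
  have hNμ : ∀ n, N ≤ n → μ.val n = 0 := fun n hn =>
    Nat.le_zero.mp ((hN n hn) ▸ hle n)
  rw [psize_eq_sum lam hN, psize_eq_sum μ hNμ, ← h2, ← Finset.sum_add_distrib]
  exact Finset.sum_congr rfl fun i _ => by have := hle i; omega

/-- Remove two boxes from the end of row `j` (columns `λⱼ-1` and `λⱼ`). -/
lemma predA (lam : PartitionF) (j : ℕ) (h2 : 2 ≤ lam.val j)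
    (hnext : lam.val (j + 1) ≤ lam.val j - 2) :
    ∃ μ : PartitionF, UpUp μ lam := by
  obtain ⟨hanti, N0, hN0⟩ := lam.2
  set ℓ := lam.val j with hℓ
  set μv : ℕ → ℕ := Function.update lam.val j (ℓ - 2) with hμv
  have hμval : ∀ i, μv i = if i = j then ℓ - 2 else lam.val i := by
    intro i; by_cases h : i = j <;> simp [hμv, Function.update, h]
  have hle : ∀ i, μv i ≤ lam.val i := by
    intro i; rw [hμval]; split_ifs with h
    · subst h; omega
    · exact le_rfl
  set N : ℕ := max N0 (j + 2) with hNdef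
  have hNlam : ∀ n, N ≤ n → lam.val n = 0 := fun n hn => hN0 n (le_trans (le_max_left _ _) hn)
  have hNμ : ∀ n, N ≤ n → μv n = 0 := fun n hn =>
    Nat.le_zero.mp ((hNlam n hn) ▸ hle n)
  have hμpart : IsPartitionFun μv := by
    constructor
    · intro a b hab
      rw [hμval, hμval]
      have h1 : lam.val b ≤ lam.val a := hanti hab
      have h3 : b = j → a ≠ j → lam.val j ≤ lam.val a := fun hb _ => hanti (by omega)
      have h4 : a = j → b ≠ j → lam.val b ≤ lam.val (j + 1) := fun ha hb => hanti (by omega)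
      split_ifs with hb ha ha
      · omega
      · have := h3 hb ha; omega
      · have := h4 ha hb; omega
      · exact h1
    · exact ⟨N, hNμ⟩
  refine ⟨⟨μv, hμpart⟩, hle, ?_, ℓ - 1, by omega, Or.inr ?_⟩
  · apply psize_add _ _ hle hNlam
    rw [Finset.sum_eq_single_of_mem j (Finset.mem_range.mpr (by omega))]
    · show lam.val j - μv j = 2
      rw [hμval]; simp; omega
    · intro b _ hb
      show lam.val b - μv b = 0
      rw [hμval]; simp [hb]
  · have hcol : ∀ k, 1 ≤ k → k ≠ ℓ - 1 → k ≠ ℓ → conjP lam.val k = conjP μv k := by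
      intro k hk hk1 hk2
      apply conjP_congr
      intro n
      rw [hμval]
      split_ifs with h
      · subst h; omega
      · rfl
    refine ⟨?_, ?_, ?_⟩
    · apply conjP_add_one hNμ (by omega) (r := j) (by omega)
      · rw [hμval]; simp; omega
      · intro i hij; rw [hμval, if_neg hij]
    · have : ℓ - 1 + 1 = ℓ := by omega
      rw [this]
      apply conjP_add_one hNμ (by omega) (r := j) (by omega)
      · rw [hμval]; simp; omega
      · intro i hij; rw [hμval, if_neg hij]
    · intro i hi h1 h2'
      exact hcol i hi h1 (by omega)

/-- Remove a vertical domino: rows `r-1` and `r` both have length 1. -/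
lemma predB (lam : PartitionF) (r : ℕ) (hr : 1 ≤ r)
    (hr1 : lam.val (r - 1) = 1) (hr2 : lam.val r = 1) (hr0 : ∀ i, r < i → lam.val i = 0) :
    ∃ μ : PartitionF, UpUp μ lam := by
  obtain ⟨hanti, N0, hN0⟩ := lam.2
  set μv : ℕ → ℕ := fun i => if i + 1 < r then lam.val i else 0 with hμv
  have hle : ∀ i, μv i ≤ lam.val i := by
    intro i; rw [hμv]; dsimp only; split_ifs <;> omega
  set N : ℕ := max N0 (r + 1) with hNdef
  have hNlam : ∀ n, N ≤ n → lam.val n = 0 := fun n hn => hN0 n (le_trans (le_max_left _ _) hn)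
  have hNμ : ∀ n, N ≤ n → μv n = 0 := fun n hn => Nat.le_zero.mp ((hNlam n hn) ▸ hle n)
  have hμpart : IsPartitionFun μv := by
    constructor
    · intro a b hab
      rw [hμv]; dsimp only
      have h1 : lam.val b ≤ lam.val a := hanti hab
      split_ifs with hb ha ha <;> omega
    · exact ⟨N, hNμ⟩
  have hvals : ∀ i, μv i = if i + 1 < r then lam.val i else 0 := fun i => rfl
  refine ⟨⟨μv, hμpart⟩, hle, ?_, 1, le_rfl, Or.inl ?_⟩
  · apply psize_add _ _ hle hNlam
    rw [← Finset.sum_subset (s₁ := {r - 1, r}) ?_ ?_]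
    · rw [Finset.sum_pair (by omega : r - 1 ≠ r)]
      show (lam.val (r-1) - μv (r-1)) + (lam.val r - μv r) = 2
      rw [hvals, hvals]
      simp only [if_neg (by omega : ¬ (r - 1 + 1 < r)), if_neg (by omega : ¬ (r + 1 < r))]
      omega
    · intro x hx
      simp only [Finset.mem_insert, Finset.mem_singleton] at hx
      apply Finset.mem_range.mpr; omega
    · intro x hxr hx
      simp only [Finset.mem_insert, Finset.mem_singleton] at hx
      push_neg at hx
      show lam.val x - μv x = 0
      rw [hvals]
      rcases lt_or_ge (x + 1) r with h | h
      · simp [h]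
      · have : lam.val x = 0 := hr0 x (by omega)
        omega
  · constructor
    · apply conjP_add_two hNμ le_rfl (r := r) (s := r - 1) (by omega)
      · omega
      · rw [hvals]; simp only [if_neg (by omega : ¬ (r + 1 < r))]; omega
      · omega
      · rw [hvals]; simp only [if_neg (by omega : ¬ (r - 1 + 1 < r))]; omega
      · intro i hi1 hi2
        rw [hvals]
        rcases lt_or_ge (i + 1) r with h | h
        · simp [h]
        · have : lam.val i = 0 := hr0 i (by omega)
          simp [if_neg (by omega : ¬ (i + 1 < r)), this]
    · intro k hk hk1
      apply conjP_congr
      intro n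
      show k ≤ lam.val n ↔ k ≤ μv n
      rw [hvals]
      rcases lt_or_ge (n + 1) r with h | h
      · simp [h]
      · rw [if_neg (by omega)]
        rcases eq_or_ne n r with rfl | hnr
        · omega
        · rcases eq_or_ne n (r - 1) with h' | h'
          · rw [h', hr1]; omega
          · have : lam.val n = 0 := hr0 n (by omega)
            omega

/-- Rows `r-1`, `r` have lengths 2 and 1; remove the box in row `r` (column 1) and the
last box of row `r-1` (column 2). -/
lemma predC (lam : PartitionF) (r : ℕ) (hr : 1 ≤ r)
    (hr1 : lam.val (r - 1) = 2) (hr2 : lam.val r = 1) (hr0 : ∀ i, r < i → lam.val i = 0) :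
    ∃ μ : PartitionF, UpUp μ lam := by
  obtain ⟨hanti, N0, hN0⟩ := lam.2
  set μv : ℕ → ℕ := fun i => if i + 1 < r then lam.val i else if i + 1 = r then 1 else 0 with hμv
  have hvals : ∀ i, μv i = if i + 1 < r then lam.val i else if i + 1 = r then 1 else 0 :=
    fun i => rfl
  have hle : ∀ i, μv i ≤ lam.val i := by
    intro i; rw [hvals]
    split_ifs with h1 h2
    · exact le_rfl
    · have : lam.val (r - 1) ≤ lam.val i := hanti (by omega)
      omega
    · omega
  set N : ℕ := max N0 (r + 1) with hNdef
  have hNlam : ∀ n, N ≤ n → lam.val n = 0 := fun n hn => hN0 n (le_trans (le_max_left _ _) hn)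
  have hNμ : ∀ n, N ≤ n → μv n = 0 := fun n hn => Nat.le_zero.mp ((hNlam n hn) ▸ hle n)
  have hμpart : IsPartitionFun μv := by
    constructor
    · intro a b hab
      rw [hvals, hvals]
      have h1 : lam.val b ≤ lam.val a := hanti hab
      have h5 : a + 1 < r → 1 ≤ lam.val a := by
        intro h
        have : lam.val (r - 1) ≤ lam.val a := hanti (by omega)
        omega
      split_ifs <;> first | omega | (exact h1) | (exact h5 (by omega))
    · exact ⟨N, hNμ⟩
  refine ⟨⟨μv, hμpart⟩, hle, ?_, 1, le_rfl, Or.inr ?_⟩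
  · apply psize_add _ _ hle hNlam
    rw [← Finset.sum_subset (s₁ := {r - 1, r}) ?_ ?_]
    · rw [Finset.sum_pair (by omega : r - 1 ≠ r)]
      show (lam.val (r-1) - μv (r-1)) + (lam.val r - μv r) = 2
      rw [hvals, hvals]
      simp only [if_neg (by omega : ¬ (r - 1 + 1 < r)), if_neg (by omega : ¬ (r + 1 < r)),
        if_pos (by omega : r - 1 + 1 = r), if_neg (by omega : ¬ (r + 1 = r))]
      omega
    · intro x hx
      simp only [Finset.mem_insert, Finset.mem_singleton] at hx
      apply Finset.mem_range.mpr; omega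
    · intro x hxr hx
      simp only [Finset.mem_insert, Finset.mem_singleton] at hx
      push_neg at hx
      show lam.val x - μv x = 0
      rw [hvals]
      rcases lt_or_ge (x + 1) r with h | h
      · simp [h]
      · have : lam.val x = 0 := hr0 x (by omega)
        omega
  · refine ⟨?_, ?_, ?_⟩
    · -- column 1: row r loses its box
      apply conjP_add_one hNμ le_rfl (r := r) (by omega)
      · rw [hvals]
        simp only [if_neg (by omega : ¬ (r + 1 < r)), if_neg (by omega : ¬ (r + 1 = r))]
        omega
      · intro i hir
        rw [hvals]
        rcases lt_or_ge (i + 1) r with h | h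
        · simp [h]
        · rcases eq_or_ne (i + 1) r with h' | h'
          · rw [if_neg (by omega), if_pos h']
            have h2 : lam.val i = 2 := by rw [show i = r - 1 by omega]; exact hr1
            omega
          · have : lam.val i = 0 := hr0 i (by omega)
            rw [if_neg (by omega), if_neg h']
            omega
    · -- column 2: row r-1 loses its box
      apply conjP_add_one hNμ (by omega) (r := r - 1) (by omega)
      · rw [hvals]
        simp only [if_neg (by omega : ¬ (r - 1 + 1 < r)), if_pos (by omega : r - 1 + 1 = r)]
        omega
      · intro i hir
        rw [hvals]
        rcases lt_or_ge (i + 1) r with h | h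
        · simp [h]
        · rw [if_neg (by omega), if_neg (by omega : ¬ (i + 1 = r))]
          rcases eq_or_ne i r with rfl | h'
          · omega
          · have : lam.val i = 0 := hr0 i (by omega)
            omega
    · intro k hk hk1 hk2
      apply conjP_congr
      intro n
      show k ≤ lam.val n ↔ k ≤ μv n
      rw [hvals]
      rcases lt_or_ge (n + 1) r with h | h
      · simp [h]
      · rcases eq_or_ne (n + 1) r with h' | h'
        · rw [if_neg (by omega), if_pos h']
          have : lam.val (n) = 2 := by rw [show n = r - 1 by omega]; exact hr1
          omega
        · rw [if_neg (by omega), if_neg h']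
          rcases eq_or_ne n r with rfl | h''
          · omega
          · have : lam.val n = 0 := hr0 n (by omega)
            omega

lemma exists_pred (lam : PartitionF) (h : 2 ≤ psize lam) : ∃ μ : PartitionF, UpUp μ lam := by
  obtain ⟨hanti, N0, hN0⟩ := lam.2
  have h0 : ∃ n, lam.val n = 0 := ⟨N0, hN0 N0 le_rfl⟩
  set n0 := Nat.find h0 with hn0
  have hzero : ∀ i, n0 ≤ i → lam.val i = 0 := by
    intro i hi
    have h1 := hanti hi
    have h2 : lam.val n0 = 0 := by rw [hn0]; exact Nat.find_spec h0
    omega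
  have hn0pos : 1 ≤ n0 := by
    rcases Nat.eq_zero_or_pos n0 with h' | h'
    · exfalso
      have hall : ∀ i, lam.val i = 0 := fun i => hzero i (by omega)
      have : psize lam = 0 := by
        rw [psize_eq_sum lam (N := 0) (fun n _ => hall n)]
        simp
      omega
    · exact h'
  set r := n0 - 1 with hrdef
  have hrpos : 1 ≤ lam.val r := by
    have := Nat.find_min h0 (m := r) (by omega)
    omega
  have hr0 : ∀ i, r < i → lam.val i = 0 := fun i hi => hzero i (by omega)
  rcases le_or_gt 2 (lam.val r) with hc | hc
  · exact predA lam r hc (by rw [hr0 (r+1) (by omega)]; omega)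
  · -- lam.val r = 1
    have hr1 : lam.val r = 1 := by omega
    rcases Nat.eq_zero_or_pos r with hre | hre
    · exfalso
      have : psize lam = 1 := by
        rw [psize_eq_sum lam (N := 1) (fun n hn => hr0 n (by omega))]
        simp [hre ▸ hr1]
      omega
    · have hs : 1 ≤ lam.val (r - 1) := le_trans hrpos (hanti (by omega))
      rcases lt_trichotomy (lam.val (r - 1)) 2 with hs1 | hs2 | hs3
      · exact predB lam r hre (by omega) hr1 hr0
      · exact predC lam r hre hs2 hr1 hr0
      · have := predA lam (r - 1) (by omega) ?_
        · exact this
        · rw [show r - 1 + 1 = r by omega]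
          omega

lemma psize_emptyP : psize emptyP = 0 := by
  rw [psize_eq_sum emptyP (N := 0) (fun _ _ => rfl)]
  simp

lemma eq_emptyP (lam : PartitionF) (h : psize lam = 0) : lam = emptyP := by
  obtain ⟨hanti, N0, hN0⟩ := lam.2
  have hsum : ∑ i ∈ Finset.range N0, lam.val i = 0 := by
    rw [← psize_eq_sum lam hN0, h]
  have : ∀ i, lam.val i = 0 := by
    intro i
    rcases lt_or_ge i N0 with hi | hi
    · exact Finset.sum_eq_zero_iff.mp hsum i (Finset.mem_range.mpr hi)
    · exact hN0 i hi
  exact Subtype.ext (funext this)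

lemma eq_oneboxP (lam : PartitionF) (h : psize lam = 1) : lam = oneboxP := by
  obtain ⟨hanti, N0, hN0⟩ := lam.2
  set N : ℕ := max N0 2 with hNdef
  have hN : ∀ n, N ≤ n → lam.val n = 0 := fun n hn => hN0 n (le_trans (le_max_left _ _) hn)
  have hsum : ∑ i ∈ Finset.range N, lam.val i = 1 := by
    rw [← psize_eq_sum lam hN, h]
  have hsub : ∑ i ∈ Finset.range 2, lam.val i ≤ 1 := by
    rw [← hsum]
    apply Finset.sum_le_sum_of_subset
    apply Finset.range_subset_range.mpr
    omega
  rw [Finset.sum_range_succ, Finset.sum_range_one] at hsub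
  have h10 : lam.val 1 ≤ lam.val 0 := hanti (by omega)
  have h0pos : 1 ≤ lam.val 0 := by
    by_contra hc
    push_neg at hc
    have hall : ∀ i, lam.val i = 0 := by
      intro i
      have := hanti (Nat.zero_le i)
      omega
    have : psize lam = 0 := by
      rw [psize_eq_sum lam (N := 0) (fun n _ => hall n)]; simp
    omega
  have h0 : lam.val 0 = 1 := by omega
  have h1 : ∀ i, 1 ≤ i → lam.val i = 0 := by
    intro i hi
    have := hanti hi
    omega
  apply Subtype.ext
  funext i
  show lam.val i = if i = 0 then 1 else 0
  rcases Nat.eq_zero_or_pos i with rfl | hi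
  · simpa using h0
  · rw [if_neg (by omega)]
    exact h1 i hi

lemma chain_lemma : ∀ n : ℕ, ∀ lam : PartitionF, psize lam = n →
    ∃ (m : ℕ) (c : ℕ → PartitionF),
      c 0 = (if Even (psize lam) then emptyP else oneboxP) ∧ c m = lam ∧
      ∀ i, i < m → UpUp (c i) (c (i + 1)) := by
  intro n
  induction n using Nat.strong_induction_on with
  | _ n ih =>
    intro lam hlam
    match n, hlam with
    | 0, hlam =>
      refine ⟨0, fun _ => lam, ?_, rfl, fun i hi => absurd hi (by omega)⟩
      rw [if_pos (by rw [hlam]; exact Even.zero), eq_emptyP lam hlam]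
    | 1, hlam =>
      refine ⟨0, fun _ => lam, ?_, rfl, fun i hi => absurd hi (by omega)⟩
      rw [if_neg (by rw [hlam]; exact Nat.not_even_one), eq_oneboxP lam hlam]
    | (n + 2), hlam =>
      obtain ⟨μ, hμ⟩ := exists_pred lam (by omega)
      have hsz : psize μ = n := by
        have := hμ.2.1
        omega
      obtain ⟨m, c, hc0, hcm, hstep⟩ := ih n (by omega) μ hsz
      refine ⟨m + 1, fun i => if i ≤ m then c i else lam, ?_, ?_, ?_⟩
      · show (if 0 ≤ m then c 0 else lam) = _
        rw [if_pos (Nat.zero_le m), hc0]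
        have heven : Even (psize lam) ↔ Even (psize μ) := by
          rw [hμ.2.1, Nat.even_add]
          simp
        by_cases he : Even (psize lam)
        · rw [if_pos he, if_pos (heven.mp he)]
        · rw [if_neg he, if_neg (fun hc => he (heven.mpr hc))]
      · show (if m + 1 ≤ m then c (m + 1) else lam) = lam
        rw [if_neg (by omega)]
      · intro i hi
        rcases lt_or_ge i m with h' | h'
        · show UpUp (if i ≤ m then c i else lam) (if i + 1 ≤ m then c (i + 1) else lam)
          rw [if_pos (by omega), if_pos (by omega)]
          exact hstep i h'
        · have : i = m := by omega
          subst this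
          show UpUp (if i ≤ i then c i else lam) (if i + 1 ≤ i then c (i + 1) else lam)
          rw [if_pos le_rfl, if_neg (by omega), hcm]
          exact hμ

/-- Every partition `λ` of even (resp. odd) size is connected to the empty (resp. one-box)
partition by a chain of `↗↗`-steps; in particular every partition of size `≥ 2` has a
predecessor under `↗↗`. -/
theorem stmt14 (lam : PartitionF) :
    (∃ (m : ℕ) (c : ℕ → PartitionF),
      c 0 = (if Even (psize lam) then emptyP else oneboxP) ∧ c m = lam ∧
      ∀ i, i < m → UpUp (c i) (c (i + 1))) ∧
    (2 ≤ psize lam → ∃ μ : PartitionF, UpUp μ lam) := by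
  exact ⟨chain_lemma (psize lam) lam rfl, fun h => exists_pred lam h⟩
end

section
/- Let q be an odd prime power, N ≥ 0, μ ⊢ N, λ ⊢ N+2 with μ ↗↗ λ (the two boxes of λ\μ lie in one column or two consecutive columns). Let L̃(λ, μ) be given by: q^{2N − 2Σ_{j≥k} m_j(μ)}(1 − (−q)^{−m_{k−1}(μ)})(1 − (−q)^{1−m_{k−1}(μ)}) for a vertical domino in column k, and q^{2N − 2Σ_{j≥k} m_j(μ)}(q−1)(1 − (−q)^{−m_{k−1}(μ)}) for boxes in columns k, k+1 (with (−q)^{−m_0(μ)} := 0). Let ξ_{λ/μ}(t) be the p_2-Pieri coefficient for modified Hall–Littlewood functions: (1 − t^{m_{k−1}})(1 − t^{m_{k−1}−1}) in the domino case and (−t)^{m_k}(1+t)(1 − t^{m_{k−1}}) in the two-column case. Then L̃(λ, μ) = ξ_{λ/μ}(−q^{−1}) · q^{n(μ) − n(λ) + 2N + 1}. -/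
open scoped BigOperators

noncomputable def mcount (μ : ℕ → ℕ) (j : ℕ) : ℕ := Nat.card {i : ℕ | μ i = j}

noncomputable def nstat (μ : ℕ → ℕ) : ℕ := ∑ᶠ i, i * μ i

lemma conj_mem {f : ℕ → ℕ} (hf : IsPartitionFun f) {j : ℕ} (hj : 1 ≤ j) (i : ℕ) :
    j ≤ f i ↔ i < conjP f j := by
  obtain ⟨hanti, M, hM⟩ := hf
  have hex : ∃ n, ¬ j ≤ f n := ⟨M, by rw [hM M le_rfl]; omega⟩
  set c := Nat.find hex with hc
  have hset : {i : ℕ | j ≤ f i} = Set.Iio c := by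
    ext a
    simp only [Set.mem_setOf_eq, Set.mem_Iio]
    constructor
    · intro ha
      by_contra h
      push_neg at h
      exact Nat.find_spec hex (le_trans ha (hanti h))
    · intro ha
      have := Nat.find_min hex ha
      omega
  have hcval : conjP f j = c := by
    rw [conjP, hset, Nat.card_eq_card_toFinset]; simp
  rw [hcval]
  constructor
  · intro hi
    have : i ∈ {i : ℕ | j ≤ f i} := hi
    rwa [hset] at this
  · intro hi
    have : i ∈ Set.Iio c := hi
    rw [← hset] at this
    exact this

lemma conjP_anti {f : ℕ → ℕ} (hf : IsPartitionFun f) {j j' : ℕ} (hj : 1 ≤ j) (h : j ≤ j') :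
    conjP f j' ≤ conjP f j := by
  by_contra h'
  push_neg at h'
  have h1 := (conj_mem hf (by omega : 1 ≤ j') (conjP f j)).mpr h'
  have h2 := (conj_mem hf hj (conjP f j)).mp (le_trans h h1)
  omega

lemma mcount_eq {f : ℕ → ℕ} (hf : IsPartitionFun f) {j : ℕ} (hj : 1 ≤ j) :
    mcount f j = conjP f j - conjP f (j + 1) := by
  have h1 := conj_mem hf hj
  have h2 := conj_mem hf (by omega : 1 ≤ j + 1)
  have hset : {i : ℕ | f i = j} = Set.Ico (conjP f (j + 1)) (conjP f j) := by
    ext i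
    simp only [Set.mem_setOf_eq, Set.mem_Ico]
    have a := h1 i; have b := h2 i
    omega
  rw [mcount, hset, Nat.card_eq_card_toFinset]; simp

lemma conjP_eq_zero {f : ℕ → ℕ} (hf : IsPartitionFun f) {j : ℕ} (hj : f 0 < j) :
    conjP f j = 0 := by
  by_contra h
  have h0 : 0 < conjP f j := Nat.pos_of_ne_zero h
  have := (conj_mem hf (by omega : 1 ≤ j) 0).mpr h0
  omega

lemma tele (c : ℕ → ℕ) (k : ℕ) (hc : ∀ a, k ≤ a → c (a + 1) ≤ c a) :
    ∀ n, (∑ j ∈ Finset.Ico k (k + n), (c j - c (j + 1)) = c k - c (k + n)) ∧ c (k + n) ≤ c k := by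
  intro n
  induction n with
  | zero => simp
  | succ n ih =>
    have hle : c (k + n + 1) ≤ c (k + n) := hc _ (by omega)
    rw [show k + (n + 1) = (k + n) + 1 from rfl,
      Finset.sum_Ico_succ_top (by omega : k ≤ k + n)]
    refine ⟨?_, by omega⟩
    rw [ih.1]
    have := ih.2
    omega

lemma sum_mcount {f : ℕ → ℕ} (hf : IsPartitionFun f) {k : ℕ} (hk : 1 ≤ k) :
    ∑ᶠ j, (if k ≤ j then mcount f j else 0) = conjP f k := by
  set T := max (f 0) k with hT
  have hsupp : Function.support (fun j => if k ≤ j then mcount f j else 0)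
      ⊆ ↑(Finset.Ico k (T + 1)) := by
    intro j hj
    simp only [Function.mem_support, ne_eq] at hj
    simp only [Finset.coe_Ico, Set.mem_Ico]
    by_cases hkj : k ≤ j
    · refine ⟨hkj, ?_⟩
      by_contra h
      push_neg at h
      have hfj : f 0 < j := by omega
      have h1 : conjP f j = 0 := conjP_eq_zero hf hfj
      rw [if_pos hkj, mcount_eq hf (by omega)] at hj
      omega
    · simp [hkj] at hj
  rw [finsum_eq_sum_of_support_subset _ hsupp]
  have hmain : ∀ j ∈ Finset.Ico k (T + 1),
      (if k ≤ j then mcount f j else 0) = conjP f j - conjP f (j + 1) := by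
    intro j hj
    rw [Finset.mem_Ico] at hj
    rw [if_pos hj.1, mcount_eq hf (by omega)]
  rw [Finset.sum_congr rfl hmain]
  have hmono : ∀ a, k ≤ a → conjP f (a + 1) ≤ conjP f a :=
    fun a ha => conjP_anti hf (by omega) (by omega)
  have htel := (tele (conjP f) k hmono (T + 1 - k)).1
  rw [show k + (T + 1 - k) = T + 1 by omega] at htel
  rw [htel, conjP_eq_zero hf (show f 0 < T + 1 by omega)]
  omega

lemma nstat_eq {f : ℕ → ℕ} (hf : IsPartitionFun f) (M : ℕ) (hM : ∀ n, M ≤ n → f n = 0)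
    {T : ℕ} (hT : f 0 ≤ T) :
    nstat f = ∑ j ∈ Finset.Icc 1 T, ∑ i ∈ Finset.range (conjP f j), i := by
  have hsupp : Function.support (fun i => i * f i) ⊆ ↑(Finset.range M) := by
    intro i hi
    simp only [Function.mem_support, ne_eq] at hi
    simp only [Finset.coe_range, Set.mem_Iio]
    by_contra h
    push_neg at h
    rw [hM i h] at hi
    simp at hi
  rw [nstat, finsum_eq_sum_of_support_subset _ hsupp]
  have step1 : ∀ i ∈ Finset.range M,
      i * f i = ∑ j ∈ Finset.Icc 1 T, (if j ≤ f i then i else 0) := by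
    intro i _
    have hfi : f i ≤ f 0 := hf.1 (Nat.zero_le i)
    have hfil : (Finset.Icc 1 T).filter (fun j => j ≤ f i) = Finset.Icc 1 (f i) := by
      ext a
      simp only [Finset.mem_filter, Finset.mem_Icc]
      omega
    rw [← Finset.sum_filter, hfil, Finset.sum_const, Nat.card_Icc,
      Nat.add_sub_cancel, smul_eq_mul, Nat.mul_comm]
  rw [Finset.sum_congr rfl step1, Finset.sum_comm]
  apply Finset.sum_congr rfl
  intro j hj
  rw [Finset.mem_Icc] at hj
  have hmem := conj_mem hf hj.1
  have hfil : (Finset.range M).filter (fun i => j ≤ f i) = Finset.range (conjP f j) := by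
    ext i
    simp only [Finset.mem_filter, Finset.mem_range]
    constructor
    · rintro ⟨_, h⟩
      exact (hmem i).mp h
    · intro h
      have hj2 := (hmem i).mpr h
      refine ⟨?_, hj2⟩
      by_contra hM2
      push_neg at hM2
      rw [hM i hM2] at hj2
      omega
  rw [← Finset.sum_filter, hfil]

lemma negq_zpow (Q : ℚ) (m : ℕ) : (-Q) ^ (-(m : ℤ)) = (-Q⁻¹) ^ m := by
  rw [zpow_neg, zpow_natCast, ← inv_pow, ← neg_inv]
/-- Let `q` be an odd prime power and let `λ ⊢ N+2` be obtained from `μ ⊢ N` with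
`μ ↗↗ λ`.  Then the counting quantity `L̃(λ, μ)` — given by
`q^(2N − 2Σ_{j≥k} m_j(μ)) (1 − (−q)^(−m_{k−1}(μ))) (1 − (−q)^(1−m_{k−1}(μ)))` in the
vertical-domino case, and `q^(2N − 2Σ_{j≥k} m_j(μ)) (q−1)(1 − (−q)^(−m_{k−1}(μ)))` in the
two-consecutive-columns case (with `(−q)^(−m_0(μ)) := 0`, i.e. those factors equal `1` when
`k = 1`) — satisfies `L̃(λ, μ) = ξ_{λ/μ}(−q⁻¹) · q^(n(μ) − n(λ) + 2N + 1)`, where `ξ` is the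
`p₂`-Pieri coefficient of the modified Hall–Littlewood functions. -/
theorem stmt16 (q : ℕ) (hodd : Odd q) (hpp : IsPrimePow q)
    (N k : ℕ) (hk : 1 ≤ k) (μ lam : PartitionF)
    (hμ : psize μ = N) (hlam : psize lam = N + 2) :
    (VDom μ.val lam.val k →
      (if k = 1 then
          (q : ℚ) ^ (2 * N - 2 * ∑ᶠ j, (if k ≤ j then mcount μ.val j else 0))
        else
          (q : ℚ) ^ (2 * N - 2 * ∑ᶠ j, (if k ≤ j then mcount μ.val j else 0)) *
            (1 - (-(q : ℚ)) ^ (-(mcount μ.val (k - 1) : ℤ))) *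
            (1 - (-(q : ℚ)) ^ (1 - (mcount μ.val (k - 1) : ℤ))))
      = (if k = 1 then 1 else
          (1 - (-(q : ℚ)⁻¹) ^ mcount μ.val (k - 1)) *
            (1 - (-(q : ℚ)⁻¹) ^ (mcount μ.val (k - 1) - 1))) *
          (q : ℚ) ^ ((nstat μ.val : ℤ) - (nstat lam.val : ℤ) + 2 * N + 1)) ∧
    (TwoCol μ.val lam.val k →
      (if k = 1 then
          (q : ℚ) ^ (2 * N - 2 * ∑ᶠ j, (if k ≤ j then mcount μ.val j else 0)) * ((q : ℚ) - 1)
        else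
          (q : ℚ) ^ (2 * N - 2 * ∑ᶠ j, (if k ≤ j then mcount μ.val j else 0)) * ((q : ℚ) - 1) *
            (1 - (-(q : ℚ)) ^ (-(mcount μ.val (k - 1) : ℤ))))
      = (-(-(q : ℚ)⁻¹)) ^ mcount μ.val k * (1 + -(q : ℚ)⁻¹) *
          (if k = 1 then 1 else 1 - (-(q : ℚ)⁻¹) ^ mcount μ.val (k - 1)) *
          (q : ℚ) ^ ((nstat μ.val : ℤ) - (nstat lam.val : ℤ) + 2 * N + 1)) := by
  obtain ⟨Mμ, hMμ⟩ := μ.2.2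
  obtain ⟨Ml, hMl⟩ := lam.2.2
  have hq0 : (q : ℚ) ≠ 0 := by
    have h2 := hpp.one_lt
    exact_mod_cast Nat.cast_ne_zero.mpr (by omega)
  set S := conjP μ.val k with hS
  have hsum : ∑ᶠ j, (if k ≤ j then mcount μ.val j else 0) = S := sum_mcount μ.2 hk
  -- S ≤ N
  have hps : psize μ = ∑ i ∈ Finset.range Mμ, μ.val i := by
    rw [psize]
    apply finsum_eq_sum_of_support_subset
    intro i hi
    simp only [Function.mem_support, ne_eq] at hi
    simp only [Finset.coe_range, Set.mem_Iio]
    by_contra h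
    push_neg at h
    exact hi (hMμ i h)
  have hmem1 := conj_mem μ.2 (le_refl 1)
  have hc1 : conjP μ.val 1 ≤ N := by
    set c1 := conjP μ.val 1 with hc1d
    calc c1 = ∑ _i ∈ Finset.range c1, 1 := by simp
      _ ≤ ∑ i ∈ Finset.range c1, μ.val i :=
          Finset.sum_le_sum (fun i hi => (hmem1 i).mpr (Finset.mem_range.mp hi))
      _ ≤ ∑ i ∈ Finset.range Mμ, μ.val i := by
          apply Finset.sum_le_sum_of_subset
          intro i hi
          simp only [Finset.mem_range] at hi ⊢
          have h1 := (hmem1 i).mpr hi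
          by_contra h
          push_neg at h
          rw [hMμ i h] at h1
          omega
      _ = N := by rw [← hps, hμ]
  have hSN : S ≤ N := le_trans (conjP_anti μ.2 le_rfl hk) hc1
  set T := max (max (μ.val 0) (lam.val 0)) (k + 1) with hT
  have hnμ : nstat μ.val = ∑ j ∈ Finset.Icc 1 T, ∑ i ∈ Finset.range (conjP μ.val j), i :=
    nstat_eq μ.2 Mμ hMμ (by omega)
  have hnl : nstat lam.val = ∑ j ∈ Finset.Icc 1 T, ∑ i ∈ Finset.range (conjP lam.val j), i :=
    nstat_eq lam.2 Ml hMl (by omega)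
  have hkT : k ∈ Finset.Icc 1 T := by
    rw [Finset.mem_Icc]
    omega
  have hk1T : k + 1 ∈ Finset.Icc 1 T := by
    rw [Finset.mem_Icc]
    omega
  constructor
  · -- vertical domino
    intro hVD
    have hstep : ∀ j ∈ Finset.Icc 1 T,
        ∑ i ∈ Finset.range (conjP lam.val j), i
          = (∑ i ∈ Finset.range (conjP μ.val j), i) + (if j = k then 2 * S + 1 else 0) := by
      intro j hj
      rw [Finset.mem_Icc] at hj
      by_cases hjk : j = k
      · subst hjk
        rw [if_pos rfl, hVD.1, ← hS, Finset.sum_range_succ, Finset.sum_range_succ]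
        ring
      · rw [if_neg hjk, hVD.2 j hj.1 hjk]
        ring
    have hnlval : nstat lam.val = nstat μ.val + (2 * S + 1) := by
      rw [hnμ, hnl, Finset.sum_congr rfl hstep, Finset.sum_add_distrib,
        Finset.sum_ite_eq' _ k (fun _ => 2 * S + 1), if_pos hkT]
    have hE : ((nstat μ.val : ℤ) - (nstat lam.val : ℤ) + 2 * N + 1)
        = ((2 * N - 2 * S : ℕ) : ℤ) := by
      rw [hnlval]
      omega
    rw [hsum, hE, zpow_natCast]
    by_cases hk1 : k = 1
    · rw [if_pos hk1, if_pos hk1, one_mul]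
    · rw [if_neg hk1, if_neg hk1]
      cases hmv : mcount μ.val (k - 1) with
      | zero => norm_num
      | succ n =>
        have e1 : (-(q : ℚ)) ^ (-((n + 1 : ℕ) : ℤ)) = (-(q : ℚ)⁻¹) ^ (n + 1) :=
          negq_zpow _ _
        have e2 : (1 - ((n + 1 : ℕ) : ℤ)) = -((n : ℕ) : ℤ) := by push_cast; ring
        have e3 : (-(q : ℚ)) ^ (-((n : ℕ) : ℤ)) = (-(q : ℚ)⁻¹) ^ n := negq_zpow _ _
        have e4 : (n + 1) - 1 = n := by omega
        rw [e4, e2, e1, e3]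
        ring
  · -- two columns
    intro hTC
    set S' := conjP μ.val (k + 1) with hS'
    have hS'S : S' ≤ S := conjP_anti μ.2 (by omega) (by omega)
    have hmk : mcount μ.val k = S - S' := mcount_eq μ.2 hk
    have hstep : ∀ j ∈ Finset.Icc 1 T,
        ∑ i ∈ Finset.range (conjP lam.val j), i
          = (∑ i ∈ Finset.range (conjP μ.val j), i)
            + (if j = k then S else 0) + (if j = k + 1 then S' else 0) := by
      intro j hj
      rw [Finset.mem_Icc] at hj
      by_cases hjk : j = k
      · subst hjk
        rw [if_pos rfl, if_neg (by omega), hTC.1, ← hS, Finset.sum_range_succ]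
        ring
      · by_cases hjk1 : j = k + 1
        · subst hjk1
          rw [if_neg hjk, if_pos rfl, hTC.2.1, ← hS', Finset.sum_range_succ]
          ring
        · rw [if_neg hjk, if_neg hjk1, hTC.2.2 j hj.1 hjk hjk1]
          ring
    have hnlval : nstat lam.val = nstat μ.val + S + S' := by
      rw [hnμ, hnl, Finset.sum_congr rfl hstep, Finset.sum_add_distrib, Finset.sum_add_distrib,
        Finset.sum_ite_eq' _ k (fun _ => S), if_pos hkT,
        Finset.sum_ite_eq' _ (k + 1) (fun _ => S'), if_pos hk1T]
    have hE : ((nstat μ.val : ℤ) - (nstat lam.val : ℤ) + 2 * N + 1)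
        = ((mcount μ.val k + (2 * N - 2 * S) + 1 : ℕ) : ℤ) := by
      rw [hnlval, hmk]
      omega
    rw [hsum, hE, zpow_natCast, neg_neg, pow_add, pow_add, pow_one]
    have hcancel : ((q : ℚ)⁻¹) ^ mcount μ.val k * (q : ℚ) ^ mcount μ.val k = 1 := by
      rw [inv_pow, inv_mul_cancel₀ (pow_ne_zero _ hq0)]
    by_cases hk1 : k = 1
    · rw [if_pos hk1, if_pos hk1]
      field_simp
      linear_combination (1 - (q : ℚ)) * hcancel
    · rw [if_neg hk1, if_neg hk1, negq_zpow]
      field_simp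
      linear_combination (-((q : ℚ) - 1) * (1 - ((q : ℚ)⁻¹) ^ mcount μ.val (k - 1) * (-1 : ℚ) ^ mcount μ.val (k - 1))) * hcancel
end
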